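/- Every coalgebra $C$ over a field $k$ is the directed union of its finite-dimensional subcoalgebras. -/

import Mathlib

/-!
STATEMENT 12: Every coalgebra `C` over a field `k` is the directed union of its
finite-dimensional subcoalgebras: every element lies in a finite-dimensional subcoalgebra,
and any two finite-dimensional subcoalgebras are contained in a common one.
-/

open TensorProduct

/-- A subspace `S ⊆ C` is a subcoalgebra if `Δ(S) ⊆ S ⊗ S` (where `S ⊗ S` is identified
with its image in `C ⊗ C`). -/
def IsSubcoalgebra {k C : Type*} [Field k] [AddCommGroup C] [Module k C] [Coalgebra k C]
    (S : Submodule k C) : Prop :=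
  ∀ x ∈ S, Coalgebra.comul (R := k) x ∈
    LinearMap.range (TensorProduct.map S.subtype S.subtype)

noncomputable section FTCaux
namespace FTCaux

variable {k C : Type*} [Field k] [AddCommGroup C] [Module k C]

/-- Image of `S ⊗ T` in `C ⊗ C`. -/
abbrev tp (S T : Submodule k C) : Submodule k (C ⊗[k] C) :=
  LinearMap.range (TensorProduct.mapIncl S T)

lemma tp_eq_span (S T : Submodule k C) :
    tp S T = Submodule.span k (Set.image2 (· ⊗ₜ[k] ·) (S : Set C) (T : Set C)) :=
  (TensorProduct.range_mapIncl S T).trans (Submodule.map₂_eq_span_image2 _ S T)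

lemma tmul_mem_tp {S T : Submodule k C} {s t : C} (hs : s ∈ S) (ht : t ∈ T) :
    s ⊗ₜ[k] t ∈ tp S T := by
  rw [tp_eq_span]
  exact Submodule.subset_span ⟨s, hs, t, ht, rfl⟩

lemma tp_mono {S S' T T' : Submodule k C} (h1 : S ≤ S') (h2 : T ≤ T') :
    tp S T ≤ tp S' T' := by
  rw [tp_eq_span, tp_eq_span]
  exact Submodule.span_mono (Set.image2_subset h1 h2)

/-- A linear projection of `C` onto a subspace `S`. -/
lemma exists_proj (S : Submodule k C) :
    ∃ π : C →ₗ[k] C, (∀ s ∈ S, π s = s) ∧ LinearMap.range π ≤ S := by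
  obtain ⟨S', hc⟩ := Submodule.exists_isCompl S
  refine ⟨S.subtype ∘ₗ S.projectionOnto S' hc, fun s hs => ?_, ?_⟩
  · have := Submodule.linearProjOfIsCompl_apply_left hc ⟨s, hs⟩
    simp [this]
  · rintro x ⟨y, rfl⟩
    exact (S.projectionOnto S' hc y).2

lemma inf_le_tp (S T : Submodule k C) : tp S ⊤ ⊓ tp ⊤ T ≤ tp S T := by
  obtain ⟨π, hπ, hπr⟩ := exists_proj S
  obtain ⟨ρ, hρ, hρr⟩ := exists_proj T
  rintro x ⟨hxS, hxT⟩
  have hfix1 : ∀ w ∈ tp S (⊤ : Submodule k C), LinearMap.rTensor C π w = w := by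
    intro w hw
    rw [tp_eq_span] at hw
    induction hw using Submodule.span_induction with
    | mem w hw =>
      obtain ⟨s, hs, t, -, rfl⟩ := hw
      simp [LinearMap.rTensor_tmul, hπ s hs]
    | zero => simp
    | add a b _ _ ha hb => simp [map_add, ha, hb]
    | smul r a _ ha => simp [map_smul, ha]
  have hfix2 : ∀ w ∈ tp (⊤ : Submodule k C) T, LinearMap.lTensor C ρ w = w := by
    intro w hw
    rw [tp_eq_span] at hw
    induction hw using Submodule.span_induction with
    | mem w hw =>
      obtain ⟨s, -, t, ht, rfl⟩ := hw
      simp [LinearMap.lTensor_tmul, hρ t ht]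
    | zero => simp
    | add a b _ _ ha hb => simp [map_add, ha, hb]
    | smul r a _ ha => simp [map_smul, ha]
  have key : TensorProduct.map π ρ x = x := by
    rw [← LinearMap.rTensor_comp_lTensor]
    simp only [LinearMap.comp_apply]
    rw [hfix2 x hxT, hfix1 x hxS]
  rw [← key]
  have : ∀ w : C ⊗[k] C, TensorProduct.map π ρ w ∈ tp S T := by
    intro w
    induction w using TensorProduct.induction_on with
    | zero => simp
    | tmul a b => exact tmul_mem_tp (hπr ⟨a, rfl⟩) (hρr ⟨b, rfl⟩)
    | add a b ha hb => rw [map_add]; exact add_mem ha hb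
  exact this x

/-- Contract the left tensor factor with a functional. -/
def lap (f : C →ₗ[k] k) (M : Type*) [AddCommGroup M] [Module k M] :
    C ⊗[k] M →ₗ[k] M :=
  (TensorProduct.lid k M).toLinearMap ∘ₗ f.rTensor M

/-- Contract the right tensor factor with a functional. -/
def rap (g : C →ₗ[k] k) (M : Type*) [AddCommGroup M] [Module k M] :
    M ⊗[k] C →ₗ[k] M :=
  (TensorProduct.rid k M).toLinearMap ∘ₗ g.lTensor M

@[simp] lemma lap_tmul (f : C →ₗ[k] k) {M : Type*} [AddCommGroup M] [Module k M]
    (a : C) (m : M) : lap f M (a ⊗ₜ[k] m) = f a • m := by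
  simp [lap]

@[simp] lemma rap_tmul (g : C →ₗ[k] k) {M : Type*} [AddCommGroup M] [Module k M]
    (m : M) (b : C) : rap g M (m ⊗ₜ[k] b) = g b • m := by
  simp [rap]

lemma lap_assoc (f : C →ₗ[k] k) (w : C ⊗[k] C) (b : C) :
    lap f (C ⊗[k] C) (TensorProduct.assoc k C C C (w ⊗ₜ[k] b)) =
      (lap f C w) ⊗ₜ[k] b := by
  induction w using TensorProduct.induction_on with
  | zero => simp
  | tmul a a' => simp [smul_tmul']
  | add u v hu hv =>
    rw [add_tmul, map_add, map_add, hu, hv, map_add, add_tmul]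

lemma rap_assoc_symm (g : C →ₗ[k] k) (a : C) (w : C ⊗[k] C) :
    rap g (C ⊗[k] C) ((TensorProduct.assoc k C C C).symm (a ⊗ₜ[k] w)) =
      a ⊗ₜ[k] rap g C w := by
  induction w using TensorProduct.induction_on with
  | zero => simp
  | tmul b b' => simp [tmul_smul]
  | add u v hu hv =>
    rw [tmul_add, map_add, map_add, hu, hv, map_add, tmul_add]

section Coalg
variable [Coalgebra k C]

open Coalgebra

/-- `Tm g = (id ⊗ g) ∘ Δ`. -/
def Tm (g : C →ₗ[k] k) : C →ₗ[k] C := rap g C ∘ₗ comul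

/-- `Sm f = (f ⊗ id) ∘ Δ`. -/
def Sm (f : C →ₗ[k] k) : C →ₗ[k] C := lap f C ∘ₗ comul

lemma Tm_apply (g : C →ₗ[k] k) (c : C) : Tm g c = rap g C (comul c) := rfl
lemma Sm_apply (f : C →ₗ[k] k) (c : C) : Sm f c = lap f C (comul c) := rfl

/-- `Δ ∘ T g = (id ⊗ T g) ∘ Δ`. -/
lemma comul_Tm (g : C →ₗ[k] k) (c : C) :
    comul (R := k) (Tm g c) = LinearMap.lTensor C (Tm g) (comul c) := by
  obtain ⟨sF, hsF⟩ := TensorProduct.exists_finset (R := k) (comul c)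
  have coas := Coalgebra.coassoc_apply (R := k) c
  have := congrArg (rap g (C ⊗[k] C) ∘ₗ ((TensorProduct.assoc k C C C).symm : _ →ₗ[k] _)) coas
  simp only [LinearMap.comp_apply, LinearEquiv.coe_coe, LinearEquiv.symm_apply_apply] at this
  have lhs : rap g (C ⊗[k] C) (LinearMap.rTensor C (comul (R := k)) (comul c)) =
      comul (R := k) (Tm g c) := by
    rw [hsF]
    simp only [map_sum, LinearMap.rTensor_tmul, rap_tmul]
    rw [Tm_apply, hsF, map_sum, map_sum]
    simp only [rap_tmul, map_smul, map_sum, Tm_apply]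
  have rhs : rap g (C ⊗[k] C) ((TensorProduct.assoc k C C C).symm
      (LinearMap.lTensor C (comul (R := k)) (comul c))) =
      LinearMap.lTensor C (Tm g) (comul c) := by
    rw [hsF]
    simp only [map_sum, LinearMap.lTensor_tmul, rap_assoc_symm]
    rfl
  rw [← lhs, this, rhs]

/-- `Δ ∘ S f = (S f ⊗ id) ∘ Δ`. -/
lemma comul_Sm (f : C →ₗ[k] k) (c : C) :
    comul (R := k) (Sm f c) = LinearMap.rTensor C (Sm f) (comul c) := by
  obtain ⟨sF, hsF⟩ := TensorProduct.exists_finset (R := k) (comul c)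
  have coas := Coalgebra.coassoc_apply (R := k) c
  have := congrArg (lap f (C ⊗[k] C)) coas
  have lhs : lap f (C ⊗[k] C) ((TensorProduct.assoc k C C C)
      (LinearMap.rTensor C (comul (R := k)) (comul c))) =
      LinearMap.rTensor C (Sm f) (comul c) := by
    rw [hsF]
    simp only [map_sum, LinearMap.rTensor_tmul, lap_assoc]
    rfl
  have rhs : lap f (C ⊗[k] C) (LinearMap.lTensor C (comul (R := k)) (comul c)) =
      comul (R := k) (Sm f c) := by
    rw [hsF]
    simp only [map_sum, LinearMap.lTensor_tmul, lap_tmul]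
    rw [Sm_apply, hsF, map_sum, map_sum]
    simp only [lap_tmul, map_smul, map_sum, Tm_apply]
  rw [← lhs, this, rhs]

/-- `Sm f` and `Tm g` commute. -/
lemma Sm_Tm_comm (f g : C →ₗ[k] k) (c : C) : Sm f (Tm g c) = Tm g (Sm f c) := by
  obtain ⟨sF, hsF⟩ := TensorProduct.exists_finset (R := k) (comul c)
  rw [Sm_apply, comul_Tm, hsF]
  simp only [map_sum, LinearMap.lTensor_tmul, lap_tmul]
  rw [Tm_apply, Sm_apply, hsF, map_sum, map_sum]
  simp only [lap_tmul, map_smul, map_sum, Tm_apply]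

lemma lap_counit_comul (c : C) : lap (counit (R := k)) C (comul c) = c := by
  rw [lap, LinearMap.comp_apply, Coalgebra.rTensor_counit_comul]
  simp

lemma rap_counit_comul (c : C) : rap (counit (R := k)) C (comul c) = c := by
  rw [rap, LinearMap.comp_apply, Coalgebra.lTensor_counit_comul]
  simp

end Coalg

/-- A finite "dual spanning family" for a finite-dimensional subspace. -/
lemma exists_dual_family (X : Submodule k C) [FiniteDimensional k X] :
    ∃ (n : ℕ) (x : Fin n → C) (f : Fin n → (C →ₗ[k] k)),
      (∀ i, x i ∈ X) ∧ (∀ v ∈ X, ∑ i, f i v • x i = v) := by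
  obtain ⟨X', hc⟩ := Submodule.exists_isCompl X
  let b := Module.finBasis k X
  refine ⟨Module.finrank k X, fun i => (b i : C),
    fun i => (b.coord i) ∘ₗ X.projectionOnto X' hc, fun i => (b i).2, fun v hv => ?_⟩
  have hproj : X.projectionOnto X' hc v = ⟨v, hv⟩ :=
    Submodule.linearProjOfIsCompl_apply_left hc ⟨v, hv⟩
  simp only [LinearMap.comp_apply, hproj, Module.Basis.coord_apply]
  have := congrArg (Submodule.subtype X) (b.sum_repr ⟨v, hv⟩)
  rw [map_sum] at this
  simpa only [map_smul, Submodule.subtype_apply] using this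

lemma left_expand {X : Submodule k C} {n : ℕ} {x : Fin n → C} {f : Fin n → (C →ₗ[k] k)}
    (hexp : ∀ v ∈ X, ∑ i, f i v • x i = v) :
    ∀ w ∈ tp X (⊤ : Submodule k C), ∑ i, x i ⊗ₜ[k] lap (f i) C w = w := by
  intro w hw
  rw [tp_eq_span] at hw
  induction hw using Submodule.span_induction with
  | mem w hw =>
    obtain ⟨v, hv, u, -, rfl⟩ := hw
    calc ∑ i, x i ⊗ₜ[k] lap (f i) C (v ⊗ₜ[k] u)
        = (∑ i, f i v • x i) ⊗ₜ[k] u := by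
          rw [sum_tmul]
          exact Finset.sum_congr rfl fun i _ => by rw [lap_tmul, tmul_smul, smul_tmul']
      _ = v ⊗ₜ[k] u := by rw [hexp v hv]
  | zero => simp
  | add a b _ _ ha hb =>
    simp only [map_add, tmul_add, Finset.sum_add_distrib, ha, hb]
  | smul r a _ ha =>
    simp only [map_smul, tmul_smul, ← Finset.smul_sum, ha]

lemma right_expand {Y : Submodule k C} {m : ℕ} {y : Fin m → C} {g : Fin m → (C →ₗ[k] k)}
    (hexp : ∀ v ∈ Y, ∑ j, g j v • y j = v) :
    ∀ w ∈ tp (⊤ : Submodule k C) Y, ∑ j, rap (g j) C w ⊗ₜ[k] y j = w := by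
  intro w hw
  rw [tp_eq_span] at hw
  induction hw using Submodule.span_induction with
  | mem w hw =>
    obtain ⟨u, -, v, hv, rfl⟩ := hw
    calc ∑ j, rap (g j) C (u ⊗ₜ[k] v) ⊗ₜ[k] y j
        = u ⊗ₜ[k] (∑ j, g j v • y j) := by
          rw [tmul_sum]
          exact Finset.sum_congr rfl fun j _ => by rw [rap_tmul, smul_tmul, tmul_smul]
      _ = u ⊗ₜ[k] v := by rw [hexp v hv]
  | zero => simp
  | add a b _ _ ha hb =>
    simp only [map_add, add_tmul, Finset.sum_add_distrib, ha, hb]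
  | smul r a _ ha =>
    simp only [map_smul, ← smul_tmul', ← Finset.smul_sum, ha]

end FTCaux
end FTCaux

theorem coalgebra_is_directed_union_of_finite_dimensional_subcoalgebras
    (k C : Type*) [Field k] [AddCommGroup C] [Module k C] [Coalgebra k C] :
    (∀ c : C, ∃ S : Submodule k C,
      IsSubcoalgebra S ∧ FiniteDimensional k S ∧ c ∈ S) ∧
    (∀ S T : Submodule k C,
      IsSubcoalgebra S → FiniteDimensional k S →
      IsSubcoalgebra T → FiniteDimensional k T →
      ∃ U : Submodule k C, IsSubcoalgebra U ∧ FiniteDimensional k U ∧ S ≤ U ∧ T ≤ U) := by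
  classical
  open FTCaux Coalgebra in
  constructor
  · -- every element lies in a finite-dimensional subcoalgebra
    intro c
    obtain ⟨sF, hsF⟩ := TensorProduct.exists_finset (R := k) (comul c)
    set X0 : Submodule k C := Submodule.span k ((sF.image Prod.fst : Finset C) : Set C) with hX0
    set Y0 : Submodule k C := Submodule.span k ((sF.image Prod.snd : Finset C) : Set C) with hY0
    haveI : FiniteDimensional k X0 :=
      FiniteDimensional.span_of_finite k (Finset.finite_toSet _)
    haveI : FiniteDimensional k Y0 :=
      FiniteDimensional.span_of_finite k (Finset.finite_toSet _)
    have hX : comul (R := k) c ∈ tp X0 (⊤ : Submodule k C) := by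
      rw [hsF]
      exact Submodule.sum_mem _ fun p hp => tmul_mem_tp
        (Submodule.subset_span (by simp; exact ⟨p.2, hp⟩)) Submodule.mem_top
    have hY : comul (R := k) c ∈ tp (⊤ : Submodule k C) Y0 := by
      rw [hsF]
      exact Submodule.sum_mem _ fun p hp => tmul_mem_tp Submodule.mem_top
        (Submodule.subset_span (by simp; exact ⟨p.1, hp⟩))
    obtain ⟨n, x, f, hxX, hf⟩ := exists_dual_family X0
    obtain ⟨m, y, g, hyY, hg⟩ := exists_dual_family Y0
    set cc : Fin n → Fin m → C := fun i j => Sm (f i) (Tm (g j) c) with hcc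
    have E2 : comul (R := k) c = ∑ i, x i ⊗ₜ[k] Sm (f i) c :=
      (left_expand hf (comul c) hX).symm
    have E1 : comul (R := k) c = ∑ j, Tm (g j) c ⊗ₜ[k] y j :=
      (right_expand hg (comul c) hY).symm
    have E3 : ∀ j, comul (R := k) (Tm (g j) c) = ∑ i, x i ⊗ₜ[k] cc i j := by
      intro j
      rw [comul_Tm, E2, map_sum]
      exact Finset.sum_congr rfl fun i _ => by
        rw [LinearMap.lTensor_tmul, hcc, ← Sm_Tm_comm]
    have E4 : ∀ i, comul (R := k) (Sm (f i) c) = ∑ j, cc i j ⊗ₜ[k] y j := by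
      intro i
      rw [comul_Sm, E1, map_sum]
      exact Finset.sum_congr rfl fun j _ => by rw [LinearMap.rTensor_tmul]
    set D : Submodule k C :=
      Submodule.span k (Set.range fun p : Fin n × Fin m => cc p.1 p.2) with hD
    haveI : FiniteDimensional k D :=
      FiniteDimensional.span_of_finite k (Set.finite_range _)
    have hccD : ∀ i j, cc i j ∈ D := fun i j => Submodule.subset_span ⟨(i, j), rfl⟩
    have hTgD : ∀ j, Tm (g j) c ∈ D := by
      intro j
      rw [← lap_counit_comul (k := k) (Tm (g j) c), E3 j, map_sum]
      exact Submodule.sum_mem _ fun i _ => by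
        rw [lap_tmul]; exact Submodule.smul_mem _ _ (hccD i j)
    have hcD : c ∈ D := by
      rw [← rap_counit_comul (k := k) c, E1, map_sum]
      exact Submodule.sum_mem _ fun j _ => by
        rw [rap_tmul]; exact Submodule.smul_mem _ _ (hTgD j)
    have hΔcc : ∀ i j, comul (R := k) (cc i j) ∈ tp D D := by
      intro i j
      apply inf_le_tp
      constructor
      · -- in tp D ⊤
        have : cc i j = Tm (g j) (Sm (f i) c) := Sm_Tm_comm _ _ _
        rw [this, comul_Tm, E4 i, map_sum]
        exact Submodule.sum_mem _ fun j' _ => by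
          rw [LinearMap.lTensor_tmul]
          exact tmul_mem_tp (hccD i j') Submodule.mem_top
      · -- in tp ⊤ D
        rw [hcc, comul_Sm, E3 j, map_sum]
        exact Submodule.sum_mem _ fun i' _ => by
          rw [LinearMap.rTensor_tmul]
          exact tmul_mem_tp Submodule.mem_top (hccD i' j)
    refine ⟨D, ?_, inferInstance, hcD⟩
    intro v hv
    show comul (R := k) v ∈ tp D D
    induction hv using Submodule.span_induction with
    | mem v hv =>
      obtain ⟨⟨i, j⟩, rfl⟩ := hv
      exact hΔcc i j
    | zero => simp
    | add a b _ _ ha hb => rw [map_add]; exact add_mem ha hb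
    | smul r a _ ha => rw [map_smul]; exact Submodule.smul_mem _ _ ha
  · intro S T hS _ hT _
    refine ⟨S ⊔ T, ?_, inferInstance, le_sup_left, le_sup_right⟩
    intro v hv
    obtain ⟨s, hs, t, ht, rfl⟩ := Submodule.mem_sup.mp hv
    show comul (R := k) (s + t) ∈ tp (S ⊔ T) (S ⊔ T)
    rw [map_add]
    exact add_mem (tp_mono le_sup_left le_sup_left (hS s hs))
      (tp_mono le_sup_right le_sup_right (hT t ht))
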